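/- Let T ≥ 1 be a natural number and β > 0 a real number. Suppose real numbers r_1, …, r_T (token-level rewards), Q_1, …, Q_T (optimal Q-values), V_1, …, V_{T+1} (optimal state values) with V_{T+1} = 0, and strictly positive real numbers p_1, …, p_T (optimal-policy action probabilities) and q_1, …, q_T (reference-policy action probabilities) satisfy, for every t ∈ {1, …, T}: (i) p_t = exp((Q_t − V_t)/β) (soft-optimal policy), and (ii) Q_t = r_t + β·log q_t + V_{t+1} (soft Bellman equation). Then the response-level reward decomposes as ∑_{t=1}^T r_t = β·∑_{t=1}^T log(p_t / q_t) + V_1. -/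

import Mathlib

/-- Theorem 1 core (token-level reward decomposition along a trajectory):
under the soft-optimal policy `p t = exp ((Q t - V t) / β)` and the
KL-regularized Bellman equation `Q t = r t + β * log (q t) + V (t+1)` with
terminal value `V (T+1) = 0`, the response-level reward decomposes as
`∑_{t=1}^T r t = β * ∑_{t=1}^T log (p t / q t) + V 1`. -/
theorem dpo_token_level_reward_decomposition
    (T : ℕ) (hT : 1 ≤ T) (β : ℝ) (hβ : 0 < β)
    (r Q V p q : ℕ → ℝ)
    (hVterm : V (T + 1) = 0)
    (hp : ∀ t ∈ Finset.Icc 1 T, 0 < p t)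
    (hq : ∀ t ∈ Finset.Icc 1 T, 0 < q t)
    (hpolicy : ∀ t ∈ Finset.Icc 1 T, p t = Real.exp ((Q t - V t) / β))
    (hbellman : ∀ t ∈ Finset.Icc 1 T, Q t = r t + β * Real.log (q t) + V (t + 1)) :
    ∑ t ∈ Finset.Icc 1 T, r t =
      β * ∑ t ∈ Finset.Icc 1 T, Real.log (p t / q t) + V 1 := by
  have key : ∀ t ∈ Finset.Icc 1 T,
      r t = β * Real.log (p t / q t) + (V t - V (t + 1)) := by
    intro t ht
    have hlogp : Real.log (p t) = (Q t - V t) / β := by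
      rw [hpolicy t ht, Real.log_exp]
    have hlog : Real.log (p t / q t) = Real.log (p t) - Real.log (q t) :=
      Real.log_div (hp t ht).ne' (hq t ht).ne'
    have hb := hbellman t ht
    rw [hlog, hlogp]
    field_simp
    linarith [hb]
  rw [Finset.sum_congr rfl key, Finset.sum_add_distrib, ← Finset.mul_sum]
  have htel : ∑ t ∈ Finset.Icc 1 T, (V t - V (t + 1)) = V 1 - V (T + 1) := by
    rw [show Finset.Icc 1 T = Finset.map ⟨fun i => i + 1, fun a b h => by simpa using h⟩ (Finset.range T) by
      ext x; simp only [Finset.mem_Icc, Finset.mem_map, Finset.mem_range, Function.Embedding.coeFn_mk]; constructor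
      · rintro ⟨h1, h2⟩; exact ⟨x - 1, by omega, by show x - 1 + 1 = x; omega⟩
      · rintro ⟨a, ha, rfl⟩; show 1 ≤ a + 1 ∧ a + 1 ≤ T; omega]
    rw [Finset.sum_map]
    show ∑ x ∈ Finset.range T, (V (x + 1) - V (x + 1 + 1)) = _
    simpa using Finset.sum_range_sub' (fun i => V (i + 1)) T
  rw [htel, hVterm]
  ring
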